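/- Let n ≥ 1 and let D_{2n} = {x ∈ ℤ^{2n} : Σᵢ xᵢ ∈ 2ℤ} with the standard inner product. Suppose h is an isometry of D_{2n} (a ℤ-linear automorphism preserving the inner product) of order 4 with h² = −1. Then there exist α₁, …, α_{2n} ∈ D_{2n} with ⟨αᵢ, αⱼ⟩ = 2δᵢⱼ for all i, j, such that h(α_{2i−1}) = α_{2i} and h(α_{2i}) = −α_{2i−1} for all i = 1, …, n. -/

import Mathlib

/-- The root lattice `D_k = {x ∈ ℤ^k : Σ xᵢ ∈ 2ℤ}` as a `ℤ`-submodule of `ℤ^k`. -/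
def Dlat (k : ℕ) : Submodule ℤ (Fin k → ℤ) where
  carrier := {x | (2 : ℤ) ∣ ∑ i, x i}
  add_mem' := by
    rintro a b ⟨u, hu⟩ ⟨v, hv⟩
    exact ⟨u + v, by simp only [Pi.add_apply, Finset.sum_add_distrib, hu, hv]; ring⟩
  zero_mem' := ⟨0, by simp⟩
  smul_mem' := by
    rintro c x ⟨u, hu⟩
    exact ⟨c * u, by
      simp only [Pi.smul_apply, smul_eq_mul, ← Finset.mul_sum, hu]; ring⟩



lemma no_sqrt2 (x : ℤ) : x * x ≠ 2 := by
  intro hx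
  have h1 : x ≤ 1 := by nlinarith [sq_nonneg (x - 1)]
  have h2 : -1 ≤ x := by nlinarith [sq_nonneg (x + 1)]
  interval_cases x <;> omega

lemma root_struct {N : ℕ} (v : Fin N → ℤ) (hv : ∑ k, v k * v k = 2) :
    ∃ i j : Fin N, i ≠ j ∧ v i * v i = 1 ∧ v j * v j = 1 ∧
      ∀ k, k ≠ i → k ≠ j → v k = 0 := by
  classical
  set s : Finset (Fin N) := Finset.univ.filter (fun k => v k ≠ 0) with hs
  have hmem : ∀ k, k ∈ s ↔ v k ≠ 0 := by intro k; simp [hs]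
  have hsum : ∑ k ∈ s, v k * v k = 2 := by
    rw [← hv]
    refine Finset.sum_subset (Finset.subset_univ s) ?_
    intro k _ hk
    have : v k = 0 := by by_contra hc; exact hk ((hmem k).mpr hc)
    simp [this]
  have hterm : ∀ k ∈ s, 1 ≤ v k * v k := by
    intro k hk
    have hne : v k ≠ 0 := (hmem k).mp hk
    rcases hne.lt_or_gt with hlt | hlt <;> nlinarith
  have hcard : s.card ≤ 2 := by
    have := Finset.card_nsmul_le_sum s (fun k => v k * v k) 1 hterm
    simpa [hsum] using this
  interval_cases hc : s.card
  · exfalso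
    rw [Finset.card_eq_zero] at hc
    rw [hc] at hsum; simp at hsum
  · exfalso
    rw [Finset.card_eq_one] at hc
    obtain ⟨i, hi⟩ := hc
    rw [hi] at hsum
    simp at hsum
    exact no_sqrt2 _ hsum
  · rw [Finset.card_eq_two] at hc
    obtain ⟨i, j, hij, hij2⟩ := hc
    have hsum2 : v i * v i + v j * v j = 2 := by
      rw [hij2] at hsum
      rwa [Finset.sum_pair hij] at hsum
    have hi1 : 1 ≤ v i * v i := hterm i (by rw [hij2]; simp)
    have hj1 : 1 ≤ v j * v j := hterm j (by rw [hij2]; simp)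
    refine ⟨i, j, hij, by omega, by omega, ?_⟩
    intro k hki hkj
    by_contra hc2
    have : k ∈ s := (hmem k).mpr hc2
    rw [hij2] at this
    simp at this
    tauto


lemma sum_reduce {N : ℕ} (u v : Fin N → ℤ) {k l : Fin N} (hkl : k ≠ l)
    (hv0 : ∀ m, m ≠ k → m ≠ l → v m = 0) :
    ∑ m, u m * v m = u k * v k + u l * v l := by
  classical
  have : ∑ m ∈ ({k, l} : Finset (Fin N)), u m * v m = ∑ m, u m * v m := by
    refine Finset.sum_subset (Finset.subset_univ _) ?_
    intro m _ hm
    simp at hm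
    rw [hv0 m hm.1 hm.2, mul_zero]
  rw [← this, Finset.sum_pair hkl]

lemma orth_supports {N : ℕ} {u v : Fin N → ℤ} {i j k l : Fin N}
    (hkl : k ≠ l)
    (hui : u i * u i = 1) (huj : u j * u j = 1) (hu0 : ∀ m, m ≠ i → m ≠ j → u m = 0)
    (hvk : v k * v k = 1) (hvl : v l * v l = 1)
    (horth : ∑ m, u m * v m = 0)
    (hv0 : ∀ m, m ≠ k → m ≠ l → v m = 0) :
    ((k = i ∨ k = j) ∧ (l = i ∨ l = j)) ∨ (k ≠ i ∧ k ≠ j ∧ l ≠ i ∧ l ≠ j) := by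
  have hred : u k * v k + u l * v l = 0 := by
    rw [← sum_reduce u v hkl hv0]; exact horth
  by_cases hk : k = i ∨ k = j <;> by_cases hl : l = i ∨ l = j
  · exact Or.inl ⟨hk, hl⟩
  · exfalso
    push_neg at hl
    have hul : u l = 0 := hu0 l hl.1 hl.2
    have h0 : u k * v k = 0 := by rw [hul] at hred; linarith
    have huk : u k * u k = 1 := by rcases hk with rfl | rfl <;> assumption
    have : (u k * v k) * (u k * v k) = 1 := by
      calc (u k * v k) * (u k * v k) = (u k * u k) * (v k * v k) := by ring
        _ = 1 := by rw [huk, hvk]; ring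
    rw [h0] at this; norm_num at this
  · exfalso
    push_neg at hk
    have huk : u k = 0 := hu0 k hk.1 hk.2
    have h0 : u l * v l = 0 := by rw [huk] at hred; linarith
    have hul : u l * u l = 1 := by rcases hl with rfl | rfl <;> assumption
    have : (u l * v l) * (u l * v l) = 1 := by
      calc (u l * v l) * (u l * v l) = (u l * u l) * (v l * v l) := by ring
        _ = 1 := by rw [hul, hvl]; ring
    rw [h0] at this; norm_num at this
  · push_neg at hk hl
    exact Or.inr ⟨hk.1, hk.2, hl.1, hl.2⟩

lemma sum_reduce' {N : ℕ} (v : Fin N → ℤ) {k l : Fin N} (hkl : k ≠ l)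
    (hv0 : ∀ m, m ≠ k → m ≠ l → v m = 0) :
    ∑ m, v m = v k + v l := by
  have := sum_reduce (fun _ => (1:ℤ)) v hkl hv0
  simpa using this

lemma pm_one {x : ℤ} (hx : x * x = 1) : x = 1 ∨ x = -1 :=
  Int.isUnit_iff.mp (IsUnit.of_mul_eq_one (a := x) x hx)

lemma exists_orth_root (n : ℕ) (ι : Type) [Fintype ι] [DecidableEq ι]
    (hcard : Fintype.card ι < 2 * n)
    (r : ι → Fin (2 * n) → ℤ)
    (hnorm : ∀ t, ∑ k, r t k * r t k = 2)
    (horth : ∀ t t', t ≠ t' → ∑ k, r t k * r t' k = 0) :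
    ∃ v : Fin (2 * n) → ℤ, (∑ k, v k * v k = 2) ∧ (2 ∣ ∑ k, v k) ∧
      ∀ t, ∑ k, v k * r t k = 0 := by
  classical
  choose I J hIJ h1 h2 h0 using fun t => root_struct (r t) (hnorm t)
  set S : ι → Finset (Fin (2 * n)) := fun t => {I t, J t} with hS
  have hScard : ∀ t, (S t).card = 2 := fun t => Finset.card_pair (hIJ t)
  have hmemS : ∀ t k, k ∈ S t ↔ (k = I t ∨ k = J t) := by intro t k; simp [hS]
  have hzero : ∀ t k, k ∉ S t → r t k = 0 := by
    intro t k hk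
    rw [hmemS] at hk; push_neg at hk
    exact h0 t k hk.1 hk.2
  have hpair : ∀ t t', t ≠ t' → S t = S t' ∨ Disjoint (S t) (S t') := by
    intro t t' htt'
    rcases orth_supports (u := r t) (v := r t') (hIJ t') (h1 t) (h2 t) (h0 t)
      (h1 t') (h2 t') (horth t t' htt') (h0 t') with hc | hc
    · left
      have hsub : S t' ⊆ S t := by
        intro x hx
        rw [hmemS] at hx ⊢
        rcases hx with rfl | rfl
        · exact hc.1
        · exact hc.2
      have := Finset.eq_of_subset_of_card_le hsub (by rw [hScard, hScard])
      exact this.symm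
    · right
      rw [Finset.disjoint_right]
      intro x hx
      rw [hmemS] at hx
      rw [hmemS]
      push_neg
      rcases hx with rfl | rfl
      · exact ⟨hc.1, hc.2.1⟩
      · exact ⟨hc.2.2.1, hc.2.2.2⟩
  set P : Finset (Finset (Fin (2 * n))) := Finset.image S Finset.univ with hP
  have hPdisj : ∀ x ∈ P, ∀ y ∈ P, x ≠ y → Disjoint (id x) (id y) := by
    intro x hx y hy hxy
    rw [hP, Finset.mem_image] at hx hy
    obtain ⟨t, _, rfl⟩ := hx
    obtain ⟨t', _, rfl⟩ := hy
    rcases hpair t t' (by rintro rfl; exact hxy rfl) with he | hd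
    · exact absurd he hxy
    · exact hd
  have hcardU : (P.biUnion id).card = 2 * P.card := by
    rw [Finset.card_biUnion hPdisj]
    have : ∀ x ∈ P, (id x : Finset (Fin (2*n))).card = 2 := by
      intro x hx
      rw [hP, Finset.mem_image] at hx
      obtain ⟨t, _, rfl⟩ := hx
      exact hScard t
    rw [Finset.sum_congr rfl this]
    simp [mul_comm]
  have hUle : 2 * P.card ≤ 2 * n := by
    rw [← hcardU]
    simpa using Finset.card_le_univ (P.biUnion id)
  -- fibers
  set F : Finset (Fin (2*n)) → Finset ι := fun s => Finset.univ.filter (fun t => S t = s) with hF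
  have hcount : Fintype.card ι = ∑ s ∈ P, (F s).card := by
    rw [← Finset.card_univ]
    exact Finset.card_eq_sum_card_fiberwise
      (fun t _ => by rw [hP]; exact Finset.mem_image_of_mem S (Finset.mem_univ t))
  have hfib2 : ∀ s ∈ P, (F s).card ≤ 2 := by
    intro s hs
    rw [hP, Finset.mem_image] at hs
    obtain ⟨t0, _, rfl⟩ := hs
    have key : (F (S t0)).card ≤ ({1, -1} : Finset ℤ).card := by
      refine Finset.card_le_card_of_injOn (fun t => r t (I t0) * r t (J t0)) ?_ ?_
      · intro t ht
        rw [Finset.mem_coe, hF, Finset.mem_filter] at ht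
        have hI : I t0 ∈ S t := by rw [ht.2, hmemS]; left; rfl
        have hJ : J t0 ∈ S t := by rw [ht.2, hmemS]; right; rfl
        rw [hmemS] at hI hJ
        have ha : r t (I t0) * r t (I t0) = 1 := by
          rcases hI with e | e <;> rw [e]
          exacts [h1 t, h2 t]
        have hb : r t (J t0) * r t (J t0) = 1 := by
          rcases hJ with e | e <;> rw [e]
          exacts [h1 t, h2 t]
        have : (r t (I t0) * r t (J t0)) * (r t (I t0) * r t (J t0)) = 1 := by
          calc (r t (I t0) * r t (J t0)) * (r t (I t0) * r t (J t0))
              = (r t (I t0) * r t (I t0)) * (r t (J t0) * r t (J t0)) := by ring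
            _ = 1 := by rw [ha, hb]; ring
        rcases pm_one this with e | e <;> simp [e]
      · intro t ht t' ht' hg0
        have hg : r t (I t0) * r t (J t0) = r t' (I t0) * r t' (J t0) := hg0
        by_contra hne
        rw [Finset.mem_coe, hF, Finset.mem_filter] at ht ht'
        have hIt : I t0 = I t ∨ I t0 = J t := by rw [← hmemS, ht.2, hmemS]; left; rfl
        have hJt : J t0 = I t ∨ J t0 = J t := by rw [← hmemS, ht.2, hmemS]; right; rfl
        have hIt' : I t0 = I t' ∨ I t0 = J t' := by rw [← hmemS, ht'.2, hmemS]; left; rfl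
        have hJt' : J t0 = I t' ∨ J t0 = J t' := by rw [← hmemS, ht'.2, hmemS]; right; rfl
        have ha : r t (I t0) * r t (I t0) = 1 := by
          rcases hIt with e | e <;> rw [e]; exacts [h1 t, h2 t]
        have hb : r t (J t0) * r t (J t0) = 1 := by
          rcases hJt with e | e <;> rw [e]; exacts [h1 t, h2 t]
        have hc : r t' (I t0) * r t' (I t0) = 1 := by
          rcases hIt' with e | e <;> rw [e]; exacts [h1 t', h2 t']
        have hd : r t' (J t0) * r t' (J t0) = 1 := by
          rcases hJt' with e | e <;> rw [e]; exacts [h1 t', h2 t']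
        have hv0' : ∀ m, m ≠ I t0 → m ≠ J t0 → r t' m = 0 := by
          intro m hm1 hm2
          refine hzero t' m ?_
          rw [ht'.2, hmemS]
          push_neg
          exact ⟨hm1, hm2⟩
        have hsum0 : r t (I t0) * r t' (I t0) + r t (J t0) * r t' (J t0) = 0 := by
          rw [← sum_reduce (r t) (r t') (hIJ t0) hv0']
          exact horth t t' hne
        rcases pm_one ha with e1 | e1 <;> rcases pm_one hb with e2 | e2 <;>
          rcases pm_one hc with e3 | e3 <;> rcases pm_one hd with e4 | e4 <;>
          rw [e1, e2, e3, e4] at hsum0 hg <;> omega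
    simpa using key
  by_cases hU : 2 * P.card < 2 * n
  · -- two coordinates outside all supports
    set C : Finset (Fin (2*n)) := Finset.univ \ P.biUnion id with hC
    have hCcard : 2 ≤ C.card := by
      rw [hC, Finset.card_sdiff_of_subset (Finset.subset_univ _), hcardU]
      simp only [Finset.card_univ, Fintype.card_fin]
      omega
    obtain ⟨i, hi, j, hj, hij⟩ := Finset.one_lt_card.mp (by omega : 1 < C.card)
    have hri : ∀ t, r t i = 0 := by
      intro t
      refine hzero t i ?_
      intro hmem
      rw [hC, Finset.mem_sdiff] at hi
      exact hi.2 (Finset.mem_biUnion.mpr ⟨S t, Finset.mem_image_of_mem S (Finset.mem_univ t), hmem⟩)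
    have hrj : ∀ t, r t j = 0 := by
      intro t
      refine hzero t j ?_
      intro hmem
      rw [hC, Finset.mem_sdiff] at hj
      exact hj.2 (Finset.mem_biUnion.mpr ⟨S t, Finset.mem_image_of_mem S (Finset.mem_univ t), hmem⟩)
    refine ⟨fun k => if k = i then 1 else if k = j then 1 else 0, ?_, ?_, ?_⟩
    · rw [sum_reduce _ _ hij (by intro m h1 h2; simp [h1, h2])]
      simp [hij, Ne.symm hij]
    · rw [sum_reduce' _ hij (by intro m h1 h2; simp [h1, h2])]
      simp [hij, Ne.symm hij]
    · intro t
      rw [sum_reduce (fun k => if k = i then (1:ℤ) else if k = j then 1 else 0) (r t)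
        (hIJ t) (h0 t)]
      have hIne : I t ≠ i := by rintro rfl; exact absurd (hri t) (by intro e; have := h1 t; rw [e] at this; norm_num at this)
      have hIne2 : I t ≠ j := by rintro rfl; exact absurd (hrj t) (by intro e; have := h1 t; rw [e] at this; norm_num at this)
      have hJne : J t ≠ i := by rintro rfl; exact absurd (hri t) (by intro e; have := h2 t; rw [e] at this; norm_num at this)
      have hJne2 : J t ≠ j := by rintro rfl; exact absurd (hrj t) (by intro e; have := h2 t; rw [e] at this; norm_num at this)
      simp [hIne, hIne2, hJne, hJne2]
  · -- some support has exactly one root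
    have hUeq : 2 * P.card = 2 * n := le_antisymm hUle (by omega)
    have hex : ∃ s ∈ P, (F s).card ≤ 1 := by
      by_contra hc
      push_neg at hc
      have : ∑ s ∈ P, (F s).card = 2 * P.card := by
        rw [Finset.sum_congr rfl (fun s hs => le_antisymm (hfib2 s hs) (hc s hs))]
        simp [mul_comm]
      omega
    obtain ⟨s, hs, hs1⟩ := hex
    have hsP := hs
    rw [hP, Finset.mem_image] at hsP
    obtain ⟨t0, _, rfl⟩ := hsP
    have ht0F : t0 ∈ F (S t0) := by rw [hF, Finset.mem_filter]; exact ⟨Finset.mem_univ _, rfl⟩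
    have huniq : ∀ t, t ≠ t0 → S t ≠ S t0 := by
      intro t htne he
      have htF : t ∈ F (S t0) := by rw [hF, Finset.mem_filter]; exact ⟨Finset.mem_univ _, he⟩
      exact htne (Finset.card_le_one.mp hs1 t htF t0 ht0F)
    have hdisj : ∀ t, t ≠ t0 → Disjoint (S t) (S t0) := by
      intro t htne
      rcases hpair t t0 htne with he | hd
      · exact absurd he (huniq t htne)
      · exact hd
    set i := I t0
    set j := J t0
    have hij : i ≠ j := hIJ t0
    refine ⟨fun k => if k = i then r t0 j else if k = j then -(r t0 i) else 0, ?_, ?_, ?_⟩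
    · rw [sum_reduce _ _ hij (by intro m h1 h2; simp [h1, h2])]
      have := h1 t0; have := h2 t0
      simp only [if_pos rfl, if_neg (Ne.symm hij), Ne.symm hij]
      simp [hij, Ne.symm hij]
      nlinarith [h1 t0, h2 t0]
    · rw [sum_reduce' _ hij (by intro m h1 h2; simp [h1, h2])]
      simp only [if_pos rfl, if_neg (Ne.symm hij)]
      rcases pm_one (h1 t0) with e1 | e1 <;> rcases pm_one (h2 t0) with e2 | e2 <;>
        rw [e1, e2] <;> norm_num
    · intro t
      rw [sum_reduce (fun k => if k = i then r t0 j else if k = j then -(r t0 i) else 0) (r t)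
        (hIJ t) (h0 t)]
      by_cases hte : t = t0
      · subst hte
        simp only [i, j, eq_self_iff_true, ite_true, if_neg (Ne.symm (hIJ t))]
        ring
      · have hd := hdisj t hte
        have hIi : I t ≠ i := by
          intro e
          have : i ∈ S t := by rw [hmemS]; left; exact e.symm
          exact (Finset.disjoint_left.mp hd this) (by rw [hmemS]; left; rfl)
        have hIj : I t ≠ j := by
          intro e
          have : j ∈ S t := by rw [hmemS]; left; exact e.symm
          exact (Finset.disjoint_left.mp hd this) (by rw [hmemS]; right; rfl)
        have hJi : J t ≠ i := by
          intro e
          have : i ∈ S t := by rw [hmemS]; right; exact e.symm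
          exact (Finset.disjoint_left.mp hd this) (by rw [hmemS]; left; rfl)
        have hJj : J t ≠ j := by
          intro e
          have : j ∈ S t := by rw [hmemS]; right; exact e.symm
          exact (Finset.disjoint_left.mp hd this) (by rw [hmemS]; right; rfl)
        simp [hIi, hIj, hJi, hJj]

lemma ip_comm {N : ℕ} (u v : Fin N → ℤ) : ∑ k, u k * v k = ∑ k, v k * u k := by
  exact Finset.sum_congr rfl fun k _ => mul_comm _ _

lemma main_aux (n : ℕ)
    (h : Dlat (2 * n) ≃ₗ[ℤ] Dlat (2 * n))
    (hB : ∀ u v : Dlat (2 * n),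
      (∑ k, (h u : Fin (2 * n) → ℤ) k * (h v : Fin (2 * n) → ℤ) k) =
        ∑ k, (u : Fin (2 * n) → ℤ) k * (v : Fin (2 * n) → ℤ) k)
    (hsq : ∀ x : Dlat (2 * n), h (h x) = -x) :
    ∀ m, m ≤ n → ∃ a b : Fin m → Dlat (2 * n),
      (∀ i j, (∑ k, (a i : Fin (2 * n) → ℤ) k * (a j : Fin (2 * n) → ℤ) k) =
        if i = j then 2 else 0) ∧
      (∀ i j, (∑ k, (b i : Fin (2 * n) → ℤ) k * (b j : Fin (2 * n) → ℤ) k) =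
        if i = j then 2 else 0) ∧
      (∀ i j, (∑ k, (a i : Fin (2 * n) → ℤ) k * (b j : Fin (2 * n) → ℤ) k) = 0) ∧
      (∀ i, h (a i) = b i ∧ h (b i) = -(a i)) := by
  intro m
  induction m with
  | zero =>
    intro _
    exact ⟨fun i => 0, fun i => 0, fun i => i.elim0, fun i => i.elim0,
      fun i => i.elim0, fun i => i.elim0⟩
  | succ m ih =>
    intro hm
    obtain ⟨a, b, ha, hb, hab, hh⟩ := ih (by omega)
    -- apply the extension lemma
    have hcard : Fintype.card (Fin m ⊕ Fin m) < 2 * n := by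
      simp only [Fintype.card_sum, Fintype.card_fin]; omega
    set r : (Fin m ⊕ Fin m) → Fin (2 * n) → ℤ :=
      Sum.elim (fun i => (a i : Fin (2 * n) → ℤ)) (fun i => (b i : Fin (2 * n) → ℤ)) with hr
    have hnorm : ∀ t, ∑ k, r t k * r t k = 2 := by
      rintro (i | i)
      · simpa [hr] using ha i i
      · simpa [hr] using hb i i
    have horth : ∀ t t', t ≠ t' → ∑ k, r t k * r t' k = 0 := by
      rintro (i | i) (j | j) hne
      · have hij : i ≠ j := by rintro rfl; exact hne rfl
        simpa [hr, if_neg hij] using ha i j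
      · simpa [hr] using hab i j
      · rw [hr]; simp only [Sum.elim_inl, Sum.elim_inr]
        rw [ip_comm]
        exact hab j i
      · have hij : i ≠ j := by rintro rfl; exact hne rfl
        simpa [hr, if_neg hij] using hb i j
    obtain ⟨v, hv2, hvpar, hvorth⟩ := exists_orth_root n _ hcard r hnorm horth
    set α : Dlat (2 * n) := ⟨v, hvpar⟩ with hα
    set β : Dlat (2 * n) := h α with hβ
    have hαc : ∀ k, (α : Fin (2 * n) → ℤ) k = v k := fun k => rfl
    -- basic inner product facts
    have hαα : ∑ k, (α : Fin (2*n) → ℤ) k * (α : Fin (2*n) → ℤ) k = 2 := hv2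
    have hαa : ∀ i, ∑ k, (α : Fin (2*n) → ℤ) k * (a i : Fin (2*n) → ℤ) k = 0 :=
      fun i => hvorth (Sum.inl i)
    have hαb : ∀ i, ∑ k, (α : Fin (2*n) → ℤ) k * (b i : Fin (2*n) → ℤ) k = 0 :=
      fun i => hvorth (Sum.inr i)
    have hββ : ∑ k, (β : Fin (2*n) → ℤ) k * (β : Fin (2*n) → ℤ) k = 2 := by
      rw [hβ, hB α α]; exact hαα
    have hneg : ∀ (x y : Dlat (2*n)),
        (∑ k, (x : Fin (2*n) → ℤ) k * ((-y : Dlat (2*n)) : Fin (2*n) → ℤ) k)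
          = -∑ k, (x : Fin (2*n) → ℤ) k * (y : Fin (2*n) → ℤ) k := by
      intro x y
      rw [← Finset.sum_neg_distrib]
      exact Finset.sum_congr rfl fun k _ => by
        show (x : Fin (2*n) → ℤ) k * (-(y : Fin (2*n) → ℤ)) k = _
        simp
    have hαβ : ∑ k, (α : Fin (2*n) → ℤ) k * (β : Fin (2*n) → ℤ) k = 0 := by
      have h1 : (∑ k, (β : Fin (2*n) → ℤ) k * ((h β : Dlat (2*n)) : Fin (2*n) → ℤ) k)
          = ∑ k, (α : Fin (2*n) → ℤ) k * (β : Fin (2*n) → ℤ) k := by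
        rw [hβ]; exact hB α β
      rw [show h β = -α by rw [hβ]; exact hsq α] at h1
      rw [hneg β α, ip_comm] at h1
      linarith
    have hβa : ∀ i, ∑ k, (β : Fin (2*n) → ℤ) k * (a i : Fin (2*n) → ℤ) k = 0 := by
      intro i
      have h1 : (∑ k, (β : Fin (2*n) → ℤ) k * ((h (b i) : Dlat (2*n)) : Fin (2*n) → ℤ) k)
          = ∑ k, (α : Fin (2*n) → ℤ) k * (b i : Fin (2*n) → ℤ) k := by
        rw [hβ]; exact hB α (b i)
      rw [(hh i).2, hneg β (a i)] at h1
      rw [hαb i] at h1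
      linarith
    have hβb : ∀ i, ∑ k, (β : Fin (2*n) → ℤ) k * (b i : Fin (2*n) → ℤ) k = 0 := by
      intro i
      have h1 : (∑ k, (β : Fin (2*n) → ℤ) k * ((h (a i) : Dlat (2*n)) : Fin (2*n) → ℤ) k)
          = ∑ k, (α : Fin (2*n) → ℤ) k * (a i : Fin (2*n) → ℤ) k := by
        rw [hβ]; exact hB α (a i)
      rw [(hh i).1] at h1
      rw [hαa i] at h1
      exact h1
    refine ⟨Fin.snoc a α, Fin.snoc b β, ?_, ?_, ?_, ?_⟩
    · intro i j
      refine Fin.lastCases ?_ ?_ i <;> [skip; intro i'] <;>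
        refine Fin.lastCases ?_ ?_ j <;> try intro j'
      · simp [Fin.snoc_last, hαα]
      · simp only [Fin.snoc_last, Fin.snoc_castSucc]
        rw [if_neg (Fin.castSucc_lt_last j').ne']
        exact hαa j'
      · simp only [Fin.snoc_last, Fin.snoc_castSucc]
        rw [if_neg (Fin.castSucc_lt_last i').ne, ip_comm]
        exact hαa i'
      · simp only [Fin.snoc_castSucc, Fin.castSucc_inj]
        exact ha i' j'
    · intro i j
      refine Fin.lastCases ?_ ?_ i <;> [skip; intro i'] <;>
        refine Fin.lastCases ?_ ?_ j <;> try intro j'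
      · simp [Fin.snoc_last, hββ]
      · simp only [Fin.snoc_last, Fin.snoc_castSucc]
        rw [if_neg (Fin.castSucc_lt_last j').ne']
        exact hβb j'
      · simp only [Fin.snoc_last, Fin.snoc_castSucc]
        rw [if_neg (Fin.castSucc_lt_last i').ne, ip_comm]
        exact hβb i'
      · simp only [Fin.snoc_castSucc, Fin.castSucc_inj]
        exact hb i' j'
    · intro i j
      refine Fin.lastCases ?_ ?_ i <;> [skip; intro i'] <;>
        refine Fin.lastCases ?_ ?_ j <;> try intro j'
      · simp only [Fin.snoc_last]; exact hαβ
      · simp only [Fin.snoc_last, Fin.snoc_castSucc]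
        exact hαb j'
      · simp only [Fin.snoc_last, Fin.snoc_castSucc]
        rw [ip_comm]
        exact hβa i'
      · simp only [Fin.snoc_castSucc]; exact hab i' j'
    · intro i
      refine Fin.lastCases ?_ ?_ i
      · exact ⟨by simp only [Fin.snoc_last]; rfl, by simp only [Fin.snoc_last]; exact hsq α⟩
      · intro i'
        simp only [Fin.snoc_castSucc]
        exact hh i'

/-- Let `n ≥ 1` and let `h` be an isometry of the root lattice `D_{2n}` of
order 4 with `h² = −1`. Then there exist `α₁, …, α_{2n} ∈ D_{2n}` with `⟨αᵢ,αⱼ⟩ = 2δᵢⱼ`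
such that `h(α_{2i−1}) = α_{2i}` and `h(α_{2i}) = −α_{2i−1}` for `i = 1, …, n`
(here `a i = α_{2i−1}` and `b i = α_{2i}`). -/
theorem stmt_19 (n : ℕ) (hn : 1 ≤ n)
    (h : Dlat (2 * n) ≃ₗ[ℤ] Dlat (2 * n))
    (hB : ∀ u v : Dlat (2 * n),
      (∑ k, (h u : Fin (2 * n) → ℤ) k * (h v : Fin (2 * n) → ℤ) k) =
        ∑ k, (u : Fin (2 * n) → ℤ) k * (v : Fin (2 * n) → ℤ) k)
    (hord : orderOf h = 4)
    (hsq : ∀ x : Dlat (2 * n), h (h x) = -x) :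
    ∃ a b : Fin n → Dlat (2 * n),
      (∀ i j, (∑ k, (a i : Fin (2 * n) → ℤ) k * (a j : Fin (2 * n) → ℤ) k) =
        if i = j then 2 else 0) ∧
      (∀ i j, (∑ k, (b i : Fin (2 * n) → ℤ) k * (b j : Fin (2 * n) → ℤ) k) =
        if i = j then 2 else 0) ∧
      (∀ i j, (∑ k, (a i : Fin (2 * n) → ℤ) k * (b j : Fin (2 * n) → ℤ) k) = 0) ∧
      (∀ i, h (a i) = b i ∧ h (b i) = -(a i)) := by
  obtain ⟨a, b, h1, h2, h3, h4⟩ := main_aux n h hB hsq n le_rfl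
  exact ⟨a, b, h1, h2, h3, h4⟩
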